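/- The grouping transformation is implicitly Δ0-definable: for F of type Set(U × U) and G of type Set(U × Set(U)), let Σ(F,G) be the Δ0 formula stating (1) for every g ∈ G there is f ∈ F with π1(g)=π1(f), every x ∈ π2(g) satisfies ⟨π1(f),x⟩ ∈ F, and every f' ∈ F with π1(f')=π1(f) satisfies π2(f') ∈ π2(g); and (2) symmetrically, for every f ∈ F there is g ∈ G with those three properties. Then Σ(F,G) holds if and only if G = { ⟨a, {b | ⟨a,b⟩ ∈ F}⟩ | a ∈ π1(F) }, i.e., G is the grouping of F on its first component. In particular Σ implicitly defines G as a function of F. -/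
import Mathlib


/-- The Δ₀ specification Σ(F,G) of Example 1.1/4.2: (1) every `g ∈ G` is represented by
some `f ∈ F` with the same first component, its second component consists exactly of the
elements paired with that first component in `F`; (2) symmetrically, every `f ∈ F` has a
corresponding `g ∈ G`. -/
def GroupSpec {U : Type} (F : Set (U × U)) (G : Set (U × Set U)) : Prop :=
  (∀ g ∈ G, ∃ f ∈ F, g.1 = f.1 ∧ (∀ x ∈ g.2, (f.1, x) ∈ F) ∧
    (∀ f' ∈ F, f'.1 = f.1 → f'.2 ∈ g.2)) ∧
  (∀ f ∈ F, ∃ g ∈ G, g.1 = f.1 ∧ (∀ x ∈ g.2, (f.1, x) ∈ F) ∧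
    (∀ f' ∈ F, f'.1 = f.1 → f'.2 ∈ g.2))

/-- The grouping of `F` on its first component. -/
def Grouping {U : Type} (F : Set (U × U)) : Set (U × Set U) :=
  (fun a => (a, {b | (a, b) ∈ F})) '' (Prod.fst '' F)

lemma groupSpec_iff {U : Type} (F : Set (U × U)) (G : Set (U × Set U)) :
    GroupSpec F G ↔ G = Grouping F := by
  constructor
  · rintro ⟨h1, h2⟩
    ext ⟨a, S⟩
    constructor
    · intro hg
      obtain ⟨f, hf, he, hsub, hsup⟩ := h1 (a, S) hg
      refine ⟨a, ⟨f, hf, he.symm⟩, ?_⟩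
      simp only
      congr 1
      ext b
      constructor
      · intro hb; exact hsup (a, b) hb he
      · intro hb
        have h := hsub b hb
        rwa [show f.1 = a from he.symm] at h
    · rintro ⟨a', ⟨f, hf, rfl⟩, heq⟩
      obtain ⟨g, hg, he, hsub, hsup⟩ := h2 f hf
      have hS : g = (a, S) := by
        obtain ⟨ha, hSeq⟩ := Prod.mk.injEq .. ▸ heq
        refine Prod.ext (he.trans ha) ?_
        simp only
        rw [← hSeq]
        ext b
        exact ⟨fun hb => ha ▸ hsub b hb, fun hb => hsup (f.1, b) hb rfl⟩
      exact hS ▸ hg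
  · rintro rfl
    constructor
    · rintro g ⟨a, ⟨f, hf, rfl⟩, rfl⟩
      exact ⟨f, hf, rfl, fun x hx => hx, fun f' hf' he => by rw [← he]; exact hf'⟩
    · intro f hf
      refine ⟨(f.1, {b | (f.1, b) ∈ F}), ⟨f.1, ⟨f, hf, rfl⟩, rfl⟩, rfl,
        fun x hx => hx, fun f' hf' he => by rw [← he]; exact hf'⟩

theorem grouping_implicitly_definable {U : Type} :
    (∀ (F : Set (U × U)) (G : Set (U × Set U)), GroupSpec F G ↔ G = Grouping F) ∧
    (∀ (F : Set (U × U)) (G G' : Set (U × Set U)),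
      GroupSpec F G → GroupSpec F G' → G = G') := by
  refine ⟨groupSpec_iff, fun F G G' h h' => ?_⟩
  rw [(groupSpec_iff F G).mp h, (groupSpec_iff F G').mp h']
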